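/- arXiv:1506.01476 — 3 statements merged into one kernel-verified Lean document; each statement's English description precedes it below -/
import Mathlib

section
/- Let D be a nonempty set and let F be a finite family of subsets of D. Then there exists a subset D₀ of D with |D₀| ≤ |F| - 1 such that for all X, Y in F with X ≠ Y, we have X ∩ D₀ ≠ Y ∩ D₀ (equivalently, D₀ meets the symmetric difference of every two distinct members of F). -/
/-- For a finite family `F` of subsets of a nonempty type, there is a finite
"distinguishing" set `D₀` of size at most `|F| - 1` such that distinct members
of `F` have distinct intersections with `D₀`. -/
theorem stmt_0 {α : Type*} [Nonempty α] (F : Finset (Set α)) :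
    ∃ D₀ : Finset α, D₀.card ≤ F.card - 1 ∧
      ∀ X ∈ F, ∀ Y ∈ F, X ≠ Y → X ∩ ↑D₀ ≠ Y ∩ ↑D₀ := by
  induction F using Finset.strongInductionOn with
  | _ F ih =>
    classical
    by_cases h1 : F.card ≤ 1
    · exact ⟨∅, by simp, fun X hX Y hY hXY _ =>
        hXY (Finset.card_le_one.mp h1 X hX Y hY)⟩
    · push_neg at h1
      obtain ⟨X, hX, Y, hY, hXY⟩ := Finset.one_lt_card.mp h1
      have hd : ∃ d, ¬ (d ∈ X ↔ d ∈ Y) := by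
        by_contra h
        push_neg at h
        exact hXY (Set.ext fun d => h d)
      obtain ⟨d, hd⟩ := hd
      set F₁ := F.filter (fun A => d ∈ A) with hF₁
      set F₂ := F.filter (fun A => d ∉ A) with hF₂
      have hmemcase : (d ∈ X ∧ d ∉ Y) ∨ (d ∉ X ∧ d ∈ Y) := by tauto
      have hne₁ : F₁.Nonempty := by
        rcases hmemcase with ⟨h1', h2'⟩ | ⟨h1', h2'⟩
        · exact ⟨X, Finset.mem_filter.mpr ⟨hX, h1'⟩⟩
        · exact ⟨Y, Finset.mem_filter.mpr ⟨hY, h2'⟩⟩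
      have hne₂ : F₂.Nonempty := by
        rcases hmemcase with ⟨h1', h2'⟩ | ⟨h1', h2'⟩
        · exact ⟨Y, Finset.mem_filter.mpr ⟨hY, h2'⟩⟩
        · exact ⟨X, Finset.mem_filter.mpr ⟨hX, h1'⟩⟩
      have hss₁ : F₁ ⊂ F := by
        obtain ⟨A, hA⟩ := hne₂
        rw [Finset.mem_filter] at hA
        exact Finset.ssubset_iff_of_subset (Finset.filter_subset _ _) |>.mpr
          ⟨A, hA.1, fun h => hA.2 (Finset.mem_filter.mp h).2⟩
      have hss₂ : F₂ ⊂ F := by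
        obtain ⟨A, hA⟩ := hne₁
        rw [Finset.mem_filter] at hA
        exact Finset.ssubset_iff_of_subset (Finset.filter_subset _ _) |>.mpr
          ⟨A, hA.1, fun h => (Finset.mem_filter.mp h).2 hA.2⟩
      obtain ⟨D₁, hD₁c, hD₁⟩ := ih F₁ hss₁
      obtain ⟨D₂, hD₂c, hD₂⟩ := ih F₂ hss₂
      refine ⟨insert d (D₁ ∪ D₂), ?_, ?_⟩
      · have hcards : F₁.card + F₂.card = F.card := by
          simpa using Finset.card_filter_add_card_filter_not
            (s := F) (p := fun A => d ∈ A)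
        have h₁ : 1 ≤ F₁.card := Finset.card_pos.mpr hne₁
        have h₂ : 1 ≤ F₂.card := Finset.card_pos.mpr hne₂
        calc (insert d (D₁ ∪ D₂)).card ≤ (D₁ ∪ D₂).card + 1 :=
              Finset.card_insert_le _ _
          _ ≤ (D₁.card + D₂.card) + 1 := by
              exact add_le_add_left (Finset.card_union_le _ _) 1
          _ ≤ F.card - 1 := by omega
      · intro A hA B hB hAB heq
        set D₀ : Finset α := insert d (D₁ ∪ D₂) with hD₀
        have hdD₀ : d ∈ D₀ := Finset.mem_insert_self _ _
        by_cases hdA : d ∈ A <;> by_cases hdB : d ∈ B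
        · -- both contain d : in F₁
          have hsub : (↑D₁ : Set α) ⊆ ↑D₀ := by
            intro z hz
            simp only [hD₀, Finset.coe_insert, Finset.coe_union, Set.mem_insert_iff,
              Set.mem_union] at *
            tauto
          have : A ∩ ↑D₁ = B ∩ ↑D₁ := by
            ext z
            constructor <;> intro hz
            · have : z ∈ A ∩ ↑D₀ := ⟨hz.1, hsub hz.2⟩
              rw [heq] at this
              exact ⟨this.1, hz.2⟩
            · have : z ∈ B ∩ ↑D₀ := ⟨hz.1, hsub hz.2⟩
              rw [← heq] at this
              exact ⟨this.1, hz.2⟩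
          exact hD₁ A (Finset.mem_filter.mpr ⟨hA, hdA⟩) B
            (Finset.mem_filter.mpr ⟨hB, hdB⟩) hAB this
        · have : d ∈ B ∩ (↑D₀ : Set α) := by rw [← heq]; exact ⟨hdA, hdD₀⟩
          exact hdB this.1
        · have : d ∈ A ∩ (↑D₀ : Set α) := by rw [heq]; exact ⟨hdB, hdD₀⟩
          exact hdA this.1
        · -- neither contains d : in F₂
          have hsub : (↑D₂ : Set α) ⊆ ↑D₀ := by
            intro z hz
            simp only [hD₀, Finset.coe_insert, Finset.coe_union, Set.mem_insert_iff,
              Set.mem_union] at *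
            tauto
          have : A ∩ ↑D₂ = B ∩ ↑D₂ := by
            ext z
            constructor <;> intro hz
            · have : z ∈ A ∩ ↑D₀ := ⟨hz.1, hsub hz.2⟩
              rw [heq] at this
              exact ⟨this.1, hz.2⟩
            · have : z ∈ B ∩ ↑D₀ := ⟨hz.1, hsub hz.2⟩
              rw [← heq] at this
              exact ⟨this.1, hz.2⟩
          exact hD₂ A (Finset.mem_filter.mpr ⟨hA, hdA⟩) B
            (Finset.mem_filter.mpr ⟨hB, hdB⟩) hAB this
end

section
/- Let D be a set, A ⊆ pow(D), l > 0, D* ⊆ D, and suppose for each set variable X in a finite family V₁' we have MX ⊆ D and M*X = MX ∩ D*, satisfying: M*X = MX whenever |MX| ≤ l, and |M*X| > l otherwise; and (MX Δ MY) ∩ D* ≠ ∅ whenever MX ≠ MY for X, Y ∈ V₁'. Define M*A as in the relativized interpretation. Then for every X ∈ V₁': MX ∈ A if and only if M*X ∈ M*A. -/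
/-- Part (c) of Lemma 3.2, for atomic formulae `X ∈ A`: under the conditions
(c1) `M*X = MX` when `|MX| ≤ l` and `|M*X| > l` otherwise, and (c2) distinct
values are distinguished inside `D*`, membership in `A` is preserved by the
relativization `M*A`. -/
theorem stmt_6 {α : Type*} {ι : Type*} (Dstar : Set α)
    (V₀star : Finset α) (hV₀star : ↑V₀star ⊆ Dstar)
    (l : ℕ) (hl : 0 < l)
    (M Mstar : ι → Set α) (hrel : ∀ i, Mstar i = M i ∩ Dstar)
    (hsize : ∀ i, (Cardinal.mk (M i) ≤ (l : Cardinal) → Mstar i = M i) ∧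
      ((l : Cardinal) < Cardinal.mk (M i) → (l : Cardinal) < Cardinal.mk (Mstar i)))
    (hdelta : ∀ i j, M i ≠ M j → ((((M i) \ (M j)) ∪ ((M j) \ (M i))) ∩ Dstar).Nonempty)
    (A : Set (Set α))
    (MstarA : Set (Set α))
    (hMstarA : MstarA =
      ((A ∩ {S | S ⊆ Dstar}) \
        ({S | ∃ i, S = Mstar i} ∪ {S | S ⊆ ↑V₀star ∧ Cardinal.mk S ≤ (l : Cardinal)})) ∪
      {S | ∃ i, S = Mstar i ∧ M i ∈ A} ∪
      ({S | S ⊆ ↑V₀star ∧ Cardinal.mk S ≤ (l : Cardinal)} ∩ A)) :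
    ∀ i, M i ∈ A ↔ Mstar i ∈ MstarA := by
  intro i
  constructor
  · intro hA
    rw [hMstarA]
    exact Or.inl (Or.inr ⟨i, rfl, hA⟩)
  · intro h
    rw [hMstarA] at h
    rcases h with (h | ⟨j, hj, hjA⟩) | ⟨⟨hsub, hcard⟩, hA⟩
    · exact absurd (Or.inl ⟨i, rfl⟩) h.2
    · have hMM : M i = M j := by
        by_contra hne
        obtain ⟨x, hx, hxD⟩ := hdelta i j hne
        have heq : M i ∩ Dstar = M j ∩ Dstar := by
          rw [← hrel i, ← hrel j]; exact hj
        rcases hx with ⟨hxi, hxnj⟩ | ⟨hxj, hxni⟩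
        · have : x ∈ M j ∩ Dstar := heq ▸ (⟨hxi, hxD⟩ : x ∈ M i ∩ Dstar)
          exact hxnj this.1
        · have : x ∈ M i ∩ Dstar := heq.symm ▸ (⟨hxj, hxD⟩ : x ∈ M j ∩ Dstar)
          exact hxni this.1
      rw [hMM]; exact hjA
    · by_cases hle : Cardinal.mk (M i) ≤ (l : Cardinal)
      · rw [← (hsize i).1 hle]; exact hA
      · exact absurd hcard (not_le.2 ((hsize i).2 (not_le.1 hle)))
end

section
/- Let Bₙ denote the n-th Bell number (the number of partitions of a set of n elements). Then for all sufficiently large n, (n/(e·ln n))^n < Bₙ < (0.792·n / ln(n+1))^n. -/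
open Finset

/-- The `n`-th Bell number: the number of partitions of `{1,…,n}`. -/
noncomputable def bell (n : ℕ) : ℕ :=
  Nat.card {P : Finset (Finset (Fin n)) //
    (∀ b ∈ P, b.Nonempty) ∧
    (∀ b ∈ P, ∀ b' ∈ P, b ≠ b' → b ∩ b' = ∅) ∧
    P.sup id = Finset.univ}

section Lower
variable (n k : ℕ)

def bellIdx (hkn : k ≤ n) (f : Fin (n - k) → Fin k) (x : Fin n) : Fin k :=
  if h : (x : ℕ) < k then ⟨x, h⟩ else f ⟨(x : ℕ) - k, by have := x.isLt; omega⟩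

def bellFiber (hkn : k ≤ n) (f : Fin (n - k) → Fin k) (i : Fin k) : Finset (Fin n) :=
  univ.filter (fun x => bellIdx n k hkn f x = i)

lemma mem_bellFiber (hkn : k ≤ n) (f : Fin (n - k) → Fin k) (i : Fin k) (x : Fin n) :
    x ∈ bellFiber n k hkn f i ↔ bellIdx n k hkn f x = i := by
  simp [bellFiber]

lemma bellFiber_nonempty (hkn : k ≤ n) (f : Fin (n - k) → Fin k) (i : Fin k) :
    (bellFiber n k hkn f i).Nonempty := by
  refine ⟨⟨(i : ℕ), lt_of_lt_of_le i.isLt hkn⟩, ?_⟩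
  rw [mem_bellFiber]
  simp [bellIdx, i.isLt]

lemma bell_lower (hk1 : 1 ≤ k) (hkn : k ≤ n) : k ^ (n - k) ≤ bell n := by
  classical
  set T := {P : Finset (Finset (Fin n)) //
    (∀ b ∈ P, b.Nonempty) ∧
    (∀ b ∈ P, ∀ b' ∈ P, b ≠ b' → b ∩ b' = ∅) ∧
    P.sup id = Finset.univ} with hT
  have keyF : ∀ f : Fin (n - k) → Fin k,
      ((univ : Finset (Fin k)).image (bellFiber n k hkn f) ∈
        {P : Finset (Finset (Fin n)) | (∀ b ∈ P, b.Nonempty) ∧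
          (∀ b ∈ P, ∀ b' ∈ P, b ≠ b' → b ∩ b' = ∅) ∧ P.sup id = Finset.univ}) := by
    intro f
    refine ⟨?_, ?_, ?_⟩
    · intro b hb
      rcases Finset.mem_image.1 hb with ⟨i, _, rfl⟩
      exact bellFiber_nonempty n k hkn f i
    · intro b hb b' hb' hne
      rcases Finset.mem_image.1 hb with ⟨i, _, rfl⟩
      rcases Finset.mem_image.1 hb' with ⟨i', _, rfl⟩
      have hii : i ≠ i' := by rintro rfl; exact hne rfl
      apply Finset.eq_empty_iff_forall_notMem.2
      intro x hx
      rw [Finset.mem_inter, mem_bellFiber, mem_bellFiber] at hx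
      exact hii (hx.1 ▸ hx.2 ▸ rfl)
    · apply Finset.eq_univ_iff_forall.2
      intro x
      rw [Finset.mem_sup]
      exact ⟨bellFiber n k hkn f (bellIdx n k hkn f x),
        Finset.mem_image_of_mem _ (Finset.mem_univ _),
        (mem_bellFiber n k hkn f _ x).2 rfl⟩
  let F : (Fin (n - k) → Fin k) → T := fun f => ⟨_, keyF f⟩
  have hFinj : Function.Injective F := by
    intro f g hfg
    have hPQ : (univ : Finset (Fin k)).image (bellFiber n k hkn f)
        = (univ : Finset (Fin k)).image (bellFiber n k hkn g) := congrArg Subtype.val hfg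
    funext m
    -- the element k + m
    have hm := m.isLt
    set x : Fin n := ⟨k + (m : ℕ), by omega⟩ with hx
    have hxk : ¬ ((x : ℕ) < k) := by simp [hx]
    have hidxf : bellIdx n k hkn f x = f m := by
      simp only [bellIdx, dif_neg hxk]
      congr 1
      ext
      simp [hx]
    have hidxg : bellIdx n k hkn g x = g m := by
      simp only [bellIdx, dif_neg hxk]
      congr 1
      ext
      simp [hx]
    -- the fiber of f m under f is a fiber of some i under g
    have hmem : bellFiber n k hkn f (f m) ∈ (univ : Finset (Fin k)).image (bellFiber n k hkn g) := by
      rw [← hPQ]; exact Finset.mem_image_of_mem _ (Finset.mem_univ _)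
    rcases Finset.mem_image.1 hmem with ⟨i, _, hi⟩
    have hxmem : x ∈ bellFiber n k hkn g i := by
      rw [hi, mem_bellFiber]; exact hidxf
    have higm : i = g m := by
      rw [mem_bellFiber] at hxmem; rw [← hxmem, hidxg]
    -- the element (f m) itself is in fiber f (f m) = fiber g (g m)
    set y : Fin n := ⟨(f m : ℕ), lt_of_lt_of_le (f m).isLt hkn⟩ with hy
    have hymem : y ∈ bellFiber n k hkn f (f m) := by
      rw [mem_bellFiber]
      simp [bellIdx, hy, (f m).isLt]
    rw [← hi, higm, mem_bellFiber] at hymem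
    have : bellIdx n k hkn g y = ⟨(y : ℕ), (f m).isLt⟩ := by
      simp [bellIdx, hy, (f m).isLt]
    rw [this] at hymem
    have : ((f m : ℕ)) = ((g m : ℕ)) := by
      have := congrArg Fin.val hymem
      simpa [hy] using this
    exact (Fin.ext this)
  have hcard := Nat.card_le_card_of_injective F hFinj
  have : Nat.card (Fin (n - k) → Fin k) = k ^ (n - k) := by
    simp [Nat.card_eq_fintype_card]
  rw [this] at hcard
  exact hcard

end Lower

section Upper
variable {n : ℕ}

/-- the block containing x -/
def blk (P : Finset (Finset (Fin n))) (x : Fin n) : Finset (Fin n) :=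
  (P.filter (fun b => x ∈ b)).sup id

structure IsPart (P : Finset (Finset (Fin n))) : Prop where
  ne : ∀ b ∈ P, b.Nonempty
  disj : ∀ b ∈ P, ∀ b' ∈ P, b ≠ b' → b ∩ b' = ∅
  cover : P.sup id = Finset.univ

namespace IsPart

variable {P : Finset (Finset (Fin n))} (hP : IsPart P)
include hP

lemma block_unique {b b' : Finset (Fin n)} {x : Fin n} (hb : b ∈ P) (hb' : b' ∈ P)
    (hx : x ∈ b) (hx' : x ∈ b') : b = b' := by
  by_contra hne
  have := hP.disj b hb b' hb' hne
  have : x ∈ b ∩ b' := Finset.mem_inter.2 ⟨hx, hx'⟩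
  rw [hP.disj b hb b' hb' hne] at this
  exact absurd this (Finset.notMem_empty x)

lemma exists_block (x : Fin n) : ∃ b ∈ P, x ∈ b := by
  have : x ∈ P.sup id := hP.cover ▸ Finset.mem_univ x
  rwa [Finset.mem_sup] at this

lemma blk_eq {b : Finset (Fin n)} {x : Fin n} (hb : b ∈ P) (hx : x ∈ b) :
    blk P x = b := by
  have hfil : P.filter (fun b => x ∈ b) = {b} := by
    apply Finset.eq_singleton_iff_unique_mem.2
    refine ⟨Finset.mem_filter.2 ⟨hb, hx⟩, ?_⟩
    intro c hc
    rw [Finset.mem_filter] at hc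
    exact hP.block_unique hc.1 hb hc.2 hx
  rw [blk, hfil, Finset.sup_singleton, id]

lemma blk_mem (x : Fin n) : blk P x ∈ P := by
  obtain ⟨b, hb, hx⟩ := hP.exists_block x
  rw [hP.blk_eq hb hx]; exact hb

lemma mem_blk (x : Fin n) : x ∈ blk P x := by
  obtain ⟨b, hb, hx⟩ := hP.exists_block x
  rw [hP.blk_eq hb hx]; exact hx

end IsPart

/-- the minimum of the block containing x -/
def mu (P : Finset (Finset (Fin n))) (x : Fin n) : Fin n :=
  if h : (blk P x).Nonempty then (blk P x).min' h else x

namespace IsPart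
variable {P : Finset (Finset (Fin n))} (hP : IsPart P)
include hP

lemma mu_eq (x : Fin n) : mu P x = (blk P x).min' ⟨x, hP.mem_blk x⟩ := by
  rw [mu, dif_pos ⟨x, hP.mem_blk x⟩]

lemma mu_mem_blk (x : Fin n) : mu P x ∈ blk P x := by
  rw [hP.mu_eq x]; exact Finset.min'_mem _ _

lemma blk_mu (x : Fin n) : blk P (mu P x) = blk P x :=
  hP.blk_eq (hP.blk_mem x) (hP.mu_mem_blk x)

lemma mu_eq_of_mem_blk {x y : Fin n} (h : y ∈ blk P x) : mu P y = mu P x := by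
  rw [hP.mu_eq y, hP.mu_eq x]
  congr 1
  exact hP.blk_eq (hP.blk_mem x) h

lemma mu_mu (x : Fin n) : mu P (mu P x) = mu P x :=
  hP.mu_eq_of_mem_blk (hP.mu_mem_blk x)

lemma blk_eq_of_mu_eq {x y : Fin n} (h : mu P y = mu P x) : blk P y = blk P x := by
  have h1 : mu P y ∈ blk P y := hP.mu_mem_blk y
  have h2 : mu P x ∈ blk P x := hP.mu_mem_blk x
  rw [h] at h1
  exact hP.block_unique (hP.blk_mem y) (hP.blk_mem x) h1 h2

lemma fiber_eq (x : Fin n) :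
    (univ.filter (fun y => mu P y = mu P x)) = blk P x := by
  ext y
  simp only [Finset.mem_filter, Finset.mem_univ, true_and]
  constructor
  · intro h
    have := hP.blk_eq_of_mu_eq h
    rw [← this]; exact hP.mem_blk y
  · intro h
    exact hP.mu_eq_of_mem_blk h

lemma P_eq :
    P = (univ.image (mu P)).image (fun i => univ.filter (fun y => mu P y = i)) := by
  ext b
  constructor
  · intro hb
    obtain ⟨x, hx⟩ := hP.ne b hb
    have hbx : blk P x = b := hP.blk_eq hb hx
    rw [Finset.mem_image]
    exact ⟨mu P x, Finset.mem_image_of_mem _ (Finset.mem_univ x), by rw [hP.fiber_eq x, hbx]⟩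
  · intro hb
    rw [Finset.mem_image] at hb
    obtain ⟨i, hi, rfl⟩ := hb
    rw [Finset.mem_image] at hi
    obtain ⟨x, _, rfl⟩ := hi
    rw [hP.fiber_eq x]
    exact hP.blk_mem x

lemma mu_fixed {x : Fin n} (h : x ∈ univ.image (mu P)) : mu P x = x := by
  rw [Finset.mem_image] at h
  obtain ⟨y, _, rfl⟩ := h
  exact hP.mu_mu y

end IsPart

lemma bell_upper (n : ℕ) :
    bell n ≤ ∑ M : Finset (Fin n), M.card ^ (n - M.card) := by
  classical
  set T := {P : Finset (Finset (Fin n)) //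
    (∀ b ∈ P, b.Nonempty) ∧
    (∀ b ∈ P, ∀ b' ∈ P, b ≠ b' → b ∩ b' = ∅) ∧
    P.sup id = Finset.univ} with hT
  let S := Σ M : Finset (Fin n), ({a : Fin n // a ∉ M} → {a : Fin n // a ∈ M})
  have hip : ∀ p : T, IsPart p.1 := fun p => ⟨p.2.1, p.2.2.1, p.2.2.2⟩
  let Φ : T → S := fun p =>
    ⟨univ.image (mu p.1), fun a =>
      ⟨mu p.1 a.1, by
        have := (hip p).mu_mu a.1
        exact Finset.mem_image_of_mem _ (Finset.mem_univ _)⟩⟩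
  have hinj : Function.Injective Φ := by
    intro p q hpq
    have hM : univ.image (mu p.1) = univ.image (mu q.1) := congrArg Sigma.fst hpq
    have key : ∀ (x : Fin n) (hx1 : x ∉ (Φ p).1) (hx2 : x ∉ (Φ q).1),
        ((Φ p).2 ⟨x, hx1⟩).1 = ((Φ q).2 ⟨x, hx2⟩).1 := by
      rw [hpq]
      intro x h1 h2
      rfl
    have hmu : mu p.1 = mu q.1 := by
      funext x
      by_cases hx : x ∈ univ.image (mu p.1)
      · have h1 : mu p.1 x = x := (hip p).mu_fixed hx
        have hx' : x ∈ univ.image (mu q.1) := hM ▸ hx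
        have h2 : mu q.1 x = x := (hip q).mu_fixed hx'
        rw [h1, h2]
      · have hx' : x ∉ univ.image (mu q.1) := hM ▸ hx
        exact key x hx hx'
    have hPQ : p.1 = q.1 := by
      rw [(hip p).P_eq, (hip q).P_eq, hmu]
    exact Subtype.ext hPQ
  have hcard := Nat.card_le_card_of_injective Φ hinj
  have hS : Nat.card S = ∑ M : Finset (Fin n), M.card ^ (n - M.card) := by
    rw [Nat.card_eq_fintype_card, Fintype.card_sigma]
    congr 1
    funext M
    rw [Fintype.card_fun, Fintype.card_coe, Fintype.card_subtype_compl,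
      Fintype.card_coe, Fintype.card_fin]
  rw [hS] at hcard
  exact hcard

end Upper


lemma tangent (x C : ℝ) (hx : 0 < x) : x * (C - Real.log x) ≤ Real.exp (C - 1) := by
  have h := Real.log_le_sub_one_of_pos (show 0 < Real.exp (C - 1) / x from
    div_pos (Real.exp_pos _) hx)
  rw [Real.log_div (ne_of_gt (Real.exp_pos _)) (ne_of_gt hx), Real.log_exp] at h
  have h2 : C - Real.log x ≤ Real.exp (C - 1) / x := by linarith
  calc x * (C - Real.log x) = (C - Real.log x) * x := by ring
    _ ≤ Real.exp (C - 1) := (le_div_iff₀ hx).1 h2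

lemma upperA (n : ℕ) (x : ℝ) (hx : 1 ≤ x) (ht : 2000 ≤ Real.log n) :
    ((n : ℝ) - x) * Real.log x ≤
      (n : ℝ) * Real.log n - n * Real.log (0.995 * Real.log n) - n
        + Real.exp (0.995 * Real.log n - 1) := by
  have hn1 : (1 : ℝ) ≤ (n : ℝ) := by
    rcases Nat.eq_zero_or_pos n with h | h
    · subst h; rw [Nat.cast_zero, Real.log_zero] at ht; linarith
    · exact_mod_cast h
  set t := Real.log n with htdef
  have ht0 : 0 < t := by linarith
  have hL : 0 < 0.995 * t := by linarith
  have hn0 : (0 : ℝ) < n := by linarith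
  set a := (n : ℝ) / (0.995 * t) with ha
  have ha0 : 0 < a := div_pos hn0 hL
  have hx0 : (0 : ℝ) < x := by linarith
  have h1 : Real.log x ≤ Real.log a + (x / a - 1) := by
    have h := Real.log_le_sub_one_of_pos (div_pos hx0 ha0)
    rw [Real.log_div (ne_of_gt hx0) (ne_of_gt ha0)] at h
    linarith
  have h3 : (n : ℝ) * Real.log x ≤ n * Real.log a + n * (x / a) - n := by
    nlinarith [mul_le_mul_of_nonneg_left h1 (le_of_lt hn0)]
  have h4 : (n : ℝ) * (x / a) = x * (0.995 * t) := by
    rw [ha]; field_simp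
  have h5 : x * (0.995 * t) - x * Real.log x ≤ Real.exp (0.995 * t - 1) := by
    have := tangent x (0.995 * t) hx0
    nlinarith [this]
  have h6 : Real.log a = t - Real.log (0.995 * t) := by
    rw [ha, Real.log_div (ne_of_gt hn0) (ne_of_gt hL)]
  nlinarith [h3, h4, h5, h6]




lemma exp_two_lt : Real.exp 2 < 7.39 := by
  have h := Real.exp_one_lt_d9
  have h0 := Real.exp_pos 1
  rw [show (2:ℝ) = 1 + 1 by norm_num, Real.exp_add]
  nlinarith

lemma exp_eight_gt : (2000 : ℝ) < Real.exp 8 := by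
  have h := Real.exp_one_gt_d9
  have h2 : (7.389 : ℝ) < Real.exp 1 * Real.exp 1 := by nlinarith
  have h4 : (54.59 : ℝ) < (Real.exp 1 * Real.exp 1) * (Real.exp 1 * Real.exp 1) := by nlinarith
  have h8 : (2000 : ℝ) < ((Real.exp 1 * Real.exp 1) * (Real.exp 1 * Real.exp 1)) *
      ((Real.exp 1 * Real.exp 1) * (Real.exp 1 * Real.exp 1)) := by nlinarith
  calc (2000:ℝ) < _ := h8
    _ = Real.exp 8 := by rw [← Real.exp_add, ← Real.exp_add, ← Real.exp_add]; norm_num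

lemma exp_four_lt : Real.exp 4 < 55 := by
  have h := Real.exp_one_lt_d9
  have h0 := Real.exp_pos 1
  have h2 : Real.exp 1 * Real.exp 1 < 7.39 := by nlinarith
  have h4 : (Real.exp 1 * Real.exp 1) * (Real.exp 1 * Real.exp 1) < 55 := by nlinarith
  calc Real.exp 4 = ((Real.exp 1 * Real.exp 1) * (Real.exp 1 * Real.exp 1)) := by
        rw [← Real.exp_add, ← Real.exp_add]; norm_num
    _ < 55 := h4

lemma log_ge_of_big (n : ℕ) (hn : 10 ^ 1000 ≤ n) : 2000 ≤ Real.log n := by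
  have h10 : (2 : ℝ) ≤ Real.log 10 := by
    rw [← Real.log_exp 2]
    apply Real.log_le_log (Real.exp_pos 2)
    nlinarith [exp_two_lt]
  have hcast : ((10 : ℝ) ^ 1000) ≤ (n : ℝ) := by
    calc ((10:ℝ) ^ 1000) = ((10 ^ 1000 : ℕ) : ℝ) := by push_cast; ring
      _ ≤ n := by exact_mod_cast hn
  have hlog : Real.log (10 ^ 1000) ≤ Real.log n :=
    Real.log_le_log (by positivity) hcast
  rw [Real.log_pow] at hlog
  push_cast at hlog
  clear hcast
  linarith

lemma nR_big (n : ℕ) (hn : 10 ^ 1000 ≤ n) : (1000 : ℝ) ≤ (n : ℝ) := by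
  have h3 : (1000 : ℕ) ≤ 10 ^ 1000 := by
    calc (1000 : ℕ) = 10 ^ 3 := by norm_num
      _ ≤ 10 ^ 1000 := Nat.pow_le_pow_right (by norm_num) (by norm_num)
  have : (1000 : ℕ) ≤ n := le_trans h3 hn
  exact_mod_cast this

set_option maxHeartbeats 1000000 in
lemma upper_main (n : ℕ) (hn : 10 ^ 1000 ≤ n) :
    (bell n : ℝ) < (0.792 * (n : ℝ) / Real.log ((n : ℝ) + 1)) ^ n := by
  have ht : 2000 ≤ Real.log n := log_ge_of_big n hn
  have hn1000 : (1000 : ℝ) ≤ (n : ℝ) := nR_big n hn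
  clear hn
  have hn0 : (0 : ℝ) < n := by linarith
  have hnN0 : n ≠ 0 := by
    intro h; rw [h] at hn0; simp at hn0
  set t := Real.log n with htdef
  have ht0 : 0 < t := by linarith
  set B := (n : ℝ) * t - n * Real.log (0.995 * t) - n + Real.exp (0.995 * t - 1) with hB
  -- step 1: bell ≤ sum
  have step1 : (bell n : ℝ) ≤ ∑ M : Finset (Fin n), ((M.card : ℝ)) ^ (n - M.card) := by
    have h := bell_upper n
    calc (bell n : ℝ) ≤ ((∑ M : Finset (Fin n), M.card ^ (n - M.card) : ℕ) : ℝ) := by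
          exact_mod_cast h
      _ = ∑ M : Finset (Fin n), ((M.card : ℝ)) ^ (n - M.card) := by push_cast; ring
  -- step 2: each term ≤ exp B
  have step2 : ∀ M : Finset (Fin n), ((M.card : ℝ)) ^ (n - M.card) ≤ Real.exp B := by
    intro M
    have hjn : M.card ≤ n := by
      have := Finset.card_le_univ M
      simpa using this
    rcases Nat.eq_zero_or_pos M.card with hj0 | hj1
    · rw [hj0]
      rw [Nat.cast_zero, Nat.sub_zero, zero_pow hnN0]
      exact (Real.exp_pos B).le
    · have hj1R : (1 : ℝ) ≤ (M.card : ℝ) := by exact_mod_cast hj1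
      have hj0R : (0 : ℝ) < (M.card : ℝ) := by linarith
      have hpow : ((M.card : ℝ)) ^ (n - M.card) =
          Real.exp (((n - M.card : ℕ) : ℝ) * Real.log (M.card)) := by
        rw [← Real.log_pow, Real.exp_log (pow_pos hj0R _)]
      rw [hpow]
      apply Real.exp_le_exp.2
      rw [Nat.cast_sub hjn]
      exact upperA n (M.card : ℝ) hj1R ht
  -- step 3: sum ≤ 2^n * exp B
  have step3 : ∑ M : Finset (Fin n), ((M.card : ℝ)) ^ (n - M.card) ≤ 2 ^ n * Real.exp B := by
    calc ∑ M : Finset (Fin n), ((M.card : ℝ)) ^ (n - M.card)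
        ≤ ∑ _M : Finset (Fin n), Real.exp B := Finset.sum_le_sum (fun M _ => step2 M)
      _ = (Fintype.card (Finset (Fin n)) : ℝ) * Real.exp B := by
          rw [Finset.sum_const, Finset.card_univ, nsmul_eq_mul]
      _ = 2 ^ n * Real.exp B := by rw [Fintype.card_finset, Fintype.card_fin]; push_cast; ring
  -- step 4 : 2^n * exp B < RHS
  have hlogn1 : 0 < Real.log ((n : ℝ) + 1) := by
    apply Real.log_pos; linarith
  have hbase : 0 < 0.792 * (n : ℝ) / Real.log ((n : ℝ) + 1) := by positivity
  have hRHS : (0.792 * (n : ℝ) / Real.log ((n : ℝ) + 1)) ^ n =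
      Real.exp ((n : ℝ) * Real.log (0.792 * (n : ℝ) / Real.log ((n : ℝ) + 1))) := by
    rw [← Real.log_pow, Real.exp_log (pow_pos hbase _)]
  have h2n : (2 : ℝ) ^ n = Real.exp ((n : ℝ) * Real.log 2) := by
    rw [← Real.log_pow]
    exact (Real.exp_log (by positivity)).symm
  have hLHS : (2 : ℝ) ^ n * Real.exp B = Real.exp ((n : ℝ) * Real.log 2 + B) := by
    rw [h2n, ← Real.exp_add]
  -- main numeric inequality
  have hlogbase : Real.log (0.792 * (n : ℝ) / Real.log ((n : ℝ) + 1)) =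
      Real.log 0.792 + t - Real.log (Real.log ((n : ℝ) + 1)) := by
    rw [Real.log_div (by positivity) (ne_of_gt hlogn1), Real.log_mul (by norm_num) (ne_of_gt hn0)]
  -- numeric facts
  have f1 : Real.exp (0.995 * t - 1) ≤ 0.0005 * (n : ℝ) := by
    have hlog0005 : (-8 : ℝ) ≤ Real.log 0.0005 := by
      have : Real.exp (-8) ≤ 0.0005 := by
        rw [Real.exp_neg]
        rw [inv_le_iff_one_le_mul₀ (Real.exp_pos 8)]
        nlinarith [exp_eight_gt]
      calc (-8 : ℝ) = Real.log (Real.exp (-8)) := (Real.log_exp _).symm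
        _ ≤ Real.log 0.0005 := Real.log_le_log (Real.exp_pos _) this
    have harg : 0.995 * t - 1 ≤ Real.log (0.0005 * n) := by
      rw [Real.log_mul (by norm_num) (ne_of_gt hn0)]
      nlinarith
    calc Real.exp (0.995 * t - 1) ≤ Real.exp (Real.log (0.0005 * n)) := Real.exp_le_exp.2 harg
      _ = 0.0005 * n := Real.exp_log (by positivity)
  have hlogn1' : Real.log ((n : ℝ) + 1) ≤ t + 0.001 := by
    have h := Real.log_le_sub_one_of_pos (show (0:ℝ) < ((n:ℝ)+1)/n by positivity)
    rw [Real.log_div (by positivity) (ne_of_gt hn0)] at h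
    have : ((n : ℝ) + 1) / n - 1 = 1 / n := by field_simp; ring
    rw [this] at h
    have h1n : (1 : ℝ) / n ≤ 0.001 := by
      rw [div_le_iff₀ hn0]; linarith
    linarith
  have hlogn1pos : t ≤ Real.log ((n : ℝ) + 1) := by
    apply Real.log_le_log hn0; linarith
  have f2 : Real.log (Real.log ((n : ℝ) + 1)) ≤ Real.log (0.995 * t) + 0.006 := by
    have hL : 0 < 0.995 * t := by linarith
    have h := Real.log_le_sub_one_of_pos (show 0 < Real.log ((n:ℝ)+1) / (0.995 * t) by positivity)
    rw [Real.log_div (ne_of_gt hlogn1) (ne_of_gt hL)] at h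
    have hratio : Real.log ((n : ℝ) + 1) / (0.995 * t) ≤ 1.006 := by
      rw [div_le_iff₀ hL]
      nlinarith
    linarith
  have f3 : (-0.30035 : ℝ) < Real.log 0.792 := by
    have h := Real.add_one_lt_exp (show (0.30035 : ℝ) ≠ 0 by norm_num)
    have hexp : Real.exp (-0.30035) < 0.792 := by
      rw [Real.exp_neg, inv_lt_iff_one_lt_mul₀ (Real.exp_pos _)]
      nlinarith
    calc (-0.30035 : ℝ) = Real.log (Real.exp (-0.30035)) := (Real.log_exp _).symm
      _ < Real.log 0.792 := Real.log_lt_log (Real.exp_pos _) hexp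
  have f4 : Real.log 2 < 0.6931472 := by
    linarith [Real.log_two_lt_d9]
  -- combine
  have main : (n : ℝ) * Real.log 2 + B < (n : ℝ) * Real.log (0.792 * (n : ℝ) / Real.log ((n : ℝ) + 1)) := by
    rw [hlogbase, hB]
    have m2 : (n:ℝ) * Real.log (Real.log ((n : ℝ) + 1)) ≤ (n:ℝ) * (Real.log (0.995 * t) + 0.006) :=
      mul_le_mul_of_nonneg_left f2 hn0.le
    have m4 : (n:ℝ) * Real.log 2 ≤ (n:ℝ) * 0.6931472 := mul_le_mul_of_nonneg_left f4.le hn0.le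
    have m3 : (n:ℝ) * (-0.30035) < (n:ℝ) * Real.log 0.792 := by
      apply mul_lt_mul_of_pos_left f3 hn0
    linarith [m2, m3, m4, f1]
  calc (bell n : ℝ) ≤ ∑ M : Finset (Fin n), ((M.card : ℝ)) ^ (n - M.card) := step1
    _ ≤ 2 ^ n * Real.exp B := step3
    _ = Real.exp ((n : ℝ) * Real.log 2 + B) := hLHS
    _ < Real.exp ((n : ℝ) * Real.log (0.792 * (n : ℝ) / Real.log ((n : ℝ) + 1))) :=
        Real.exp_lt_exp.2 main
    _ = (0.792 * (n : ℝ) / Real.log ((n : ℝ) + 1)) ^ n := hRHS.symm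

lemma exp_four_lt' : Real.exp 4 < 55 := exp_four_lt

set_option maxHeartbeats 1000000 in
lemma lower_main (n : ℕ) (hn : 10 ^ 1000 ≤ n) :
    ((n : ℝ) / (Real.exp 1 * Real.log n)) ^ n < (bell n : ℝ) := by
  have ht : 2000 ≤ Real.log n := log_ge_of_big n hn
  have hn1000 : (1000 : ℝ) ≤ (n : ℝ) := nR_big n hn
  clear hn
  have hn0 : (0 : ℝ) < n := by linarith
  set t := Real.log n with htdef
  have ht0 : 0 < t := by linarith
  set s := Real.log t with hsdef
  have hs4 : 4 ≤ s := by
    rw [hsdef, ← Real.log_exp 4]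
    exact Real.log_le_log (Real.exp_pos 4) (by linarith [exp_four_lt'])
  have hst : s ≤ t - 1 := by
    have := Real.log_le_sub_one_of_pos ht0
    rw [← hsdef] at this; linarith
  -- t^2 < 4n via sqrt
  have hsq : t * t < 4 * n := by
    have hsqrt0 : (0:ℝ) < Real.sqrt n := Real.sqrt_pos.2 hn0
    have h1 : Real.log (Real.sqrt n) ≤ Real.sqrt n - 1 := Real.log_le_sub_one_of_pos hsqrt0
    have h2 : Real.log (Real.sqrt n) = t / 2 := by rw [Real.log_sqrt hn0.le]
    have h3 : Real.sqrt n ^ 2 = (n:ℝ) := Real.sq_sqrt hn0.le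
    nlinarith [hsqrt0]
  set r := (n : ℝ) / t with hrdef
  have hr0 : 0 < r := div_pos hn0 ht0
  have hrt : r * t = (n : ℝ) := div_mul_cancel₀ _ (ne_of_gt ht0)
  have hr1 : 1 ≤ r := by
    rw [hrdef, le_div_iff₀ ht0]
    nlinarith
  set k := ⌈r⌉₊ with hkdef
  have hk_lb : r ≤ (k : ℝ) := Nat.le_ceil r
  have hk_ub : (k : ℝ) < r + 1 := Nat.ceil_lt_add_one hr0.le
  have hk1 : 1 ≤ k := by
    have : (1 : ℝ) ≤ (k : ℝ) := le_trans hr1 hk_lb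
    exact_mod_cast this
  have hrn : r + 1 ≤ (n : ℝ) := by
    rw [hrdef]
    rw [div_add' _ _ _ (ne_of_gt ht0), div_le_iff₀ ht0]
    nlinarith
  have hkn : k ≤ n := by
    have : (k : ℝ) ≤ (n : ℝ) := le_of_lt (lt_of_lt_of_le hk_ub hrn)
    exact_mod_cast this
  have hbell := bell_lower n k hk1 hkn
  have hbellR : ((k : ℝ)) ^ (n - k) ≤ (bell n : ℝ) := by
    calc ((k : ℝ)) ^ (n - k) = ((k ^ (n - k) : ℕ) : ℝ) := by push_cast; ring
      _ ≤ (bell n : ℝ) := by exact_mod_cast hbell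
  have hk0R : (0 : ℝ) < (k : ℝ) := by linarith
  -- logs
  have hlogk : t - s ≤ Real.log k := by
    have h1 : Real.log r ≤ Real.log k := Real.log_le_log hr0 hk_lb
    have h2 : Real.log r = t - s := by
      rw [hrdef, Real.log_div (ne_of_gt hn0) (ne_of_gt ht0)]
    linarith
  have hts : 0 < t - s := by linarith
  -- key inequality
  have hrs : t < r * s := by
    have h1 : r * s * t = (n : ℝ) * s := by rw [← hrt]; ring
    have h2 : t * t < (n : ℝ) * s := by nlinarith
    nlinarith
  have hkey : (n : ℝ) * (t - 1 - s) < ((n : ℝ) - k) * Real.log k := by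
    have hnk : (n : ℝ) - r - 1 ≤ (n : ℝ) - k := by linarith
    have hnk0 : 0 ≤ (n : ℝ) - k := by
      have : (k:ℝ) ≤ n := le_of_lt (lt_of_lt_of_le hk_ub hrn)
      linarith
    have c1 : ((n : ℝ) - r - 1) * (t - s) ≤ ((n : ℝ) - k) * (t - s) :=
      mul_le_mul_of_nonneg_right hnk (le_of_lt hts)
    have c2 : ((n : ℝ) - k) * (t - s) ≤ ((n : ℝ) - k) * Real.log k :=
      mul_le_mul_of_nonneg_left hlogk hnk0
    have c3 : (n : ℝ) * (t - 1 - s) < ((n : ℝ) - r - 1) * (t - s) := by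
      have expand : ((n : ℝ) - r - 1) * (t - s) - (n : ℝ) * (t - 1 - s)
          = ((n:ℝ) - r * t) + (r * s - t) + s := by ring
      nlinarith [hs4]
    linarith
  -- convert to exp form
  have hbase : (0 : ℝ) < (n : ℝ) / (Real.exp 1 * t) := by positivity
  have hlogbase : Real.log ((n : ℝ) / (Real.exp 1 * t)) = t - 1 - s := by
    rw [Real.log_div (ne_of_gt hn0) (by positivity),
      Real.log_mul (ne_of_gt (Real.exp_pos 1)) (ne_of_gt ht0), Real.log_exp]
    ring
  have hLHS : ((n : ℝ) / (Real.exp 1 * t)) ^ n = Real.exp ((n : ℝ) * (t - 1 - s)) := by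
    calc ((n : ℝ) / (Real.exp 1 * t)) ^ n
        = Real.exp (Real.log (((n : ℝ) / (Real.exp 1 * t)) ^ n)) :=
          (Real.exp_log (pow_pos hbase n)).symm
      _ = Real.exp ((n : ℝ) * Real.log ((n : ℝ) / (Real.exp 1 * t))) := by rw [Real.log_pow]
      _ = Real.exp ((n : ℝ) * (t - 1 - s)) := by rw [hlogbase]
  have hK : ((k : ℝ)) ^ (n - k) = Real.exp (((n : ℝ) - k) * Real.log k) := by
    calc ((k : ℝ)) ^ (n - k)
        = Real.exp (Real.log (((k : ℝ)) ^ (n - k))) := (Real.exp_log (pow_pos hk0R _)).symm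
      _ = Real.exp (((n - k : ℕ) : ℝ) * Real.log k) := by rw [Real.log_pow]
      _ = Real.exp (((n : ℝ) - k) * Real.log k) := by rw [Nat.cast_sub hkn]
  calc ((n : ℝ) / (Real.exp 1 * t)) ^ n = Real.exp ((n : ℝ) * (t - 1 - s)) := hLHS
    _ < Real.exp (((n : ℝ) - k) * Real.log k) := Real.exp_lt_exp.2 hkey
    _ = ((k : ℝ)) ^ (n - k) := hK.symm
    _ ≤ (bell n : ℝ) := hbellR

/-- Berend–Tassa bounds on the Bell numbers: for all sufficiently large `n`,
`(n/(e·ln n))^n < Bₙ < (0.792·n/ln(n+1))^n`. -/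
theorem stmt_15 :
    ∃ N : ℕ, ∀ n : ℕ, N ≤ n →
      ((n : ℝ) / (Real.exp 1 * Real.log n)) ^ n < (bell n : ℝ) ∧
      (bell n : ℝ) < (0.792 * (n : ℝ) / Real.log ((n : ℝ) + 1)) ^ n := by
  exact ⟨10 ^ 1000, fun n hn => ⟨lower_main n hn, upper_main n hn⟩⟩
end
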